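/- Consider n agents and m items with multi-dimensional signals: for each agent i and each subset T of the items a nonnegative signal s_{iT}, and valuations of the separable-SOS form v_{iT}(t) = g_{iT}(t restricted to coordinates other than i) + h_{iT}(t_i) for t : Fin n → ℝ, where each g_{iT} is SOS, nonnegative on nonnegative vectors, and weakly increasing in each coordinate, and each h_{iT} is nonnegative and weakly increasing. For B ⊆ Fin n and i ∈ B, define the proxy value w_{iT}(B) := v_{iT}( (s_{·T})|_{Bᶜ ∪ {i}} ), where s_{·T} is the vector j ↦ s_{jT} and (·)|_C keeps coordinates in C and zeroes the rest. Then (1/2ⁿ) · Σ_{B ⊆ Fin n} [ max over allocations (T_i)_{i∈B} of Σ_{i∈B} w_{iT_i}(B) ] ≥ (1/4) · max over allocations (T_i)_{i∈Fin n} of Σ_i v_{iT_i}( s_{·T_i} ), where an allocation assigns each relevant agent a set T_i ⊆ Fin m with the T_i pairwise disjoint. This is the 4-approximation guarantee of the Random-Sampling VCG mechanism. -/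
import Mathlib


/-- `v` is a `d`-approximate submodular-over-signals (`d`-SOS) valuation;
`SOS` means `1`-SOS. -/
def dSOS {n : ℕ} (d : ℝ) (v : (Fin n → ℝ) → ℝ) : Prop :=
  ∀ (j : Fin n) (x δ : ℝ), 0 ≤ x → 0 ≤ δ →
    ∀ t t' : Fin n → ℝ, (∀ l, 0 ≤ t' l) → (∀ l, t' l ≤ t l) →
      d * (v (Function.update t' j (x + δ)) - v (Function.update t' j x)) ≥
        v (Function.update t j (x + δ)) - v (Function.update t j x)

/-- An allocation of the `m` items to the `n` agents: disjoint bundles. -/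
def IsAlloc {n m : ℕ} (T : Fin n → Finset (Fin m)) : Prop :=
  ∀ i j : Fin n, i ≠ j → Disjoint (T i) (T j)

/-- Supremum of `f` over all allocations of the `m` items to the `n` agents. -/
noncomputable def allocSup {n m : ℕ} (f : (Fin n → Finset (Fin m)) → ℝ) : ℝ :=
  ⨆ T : {T : Fin n → Finset (Fin m) // IsAlloc T}, f T.1

section RSVCGaux
variable {n : ℕ}

noncomputable def rsMask (a : Fin n → ℝ) (C : Finset (Fin n)) : Fin n → ℝ :=
  fun l => if l ∈ C then a l else 0

lemma rsMask_insert (a : Fin n → ℝ) {C : Finset (Fin n)} {j : Fin n} (hj : j ∉ C) :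
    rsMask a (insert j C) = Function.update (rsMask a C) j (a j) := by
  funext l
  rcases eq_or_ne l j with rfl | hl
  · simp [rsMask, hj]
  · simp [rsMask, Function.update_of_ne hl, hl]

lemma rsMask_self (a : Fin n → ℝ) {C : Finset (Fin n)} {j : Fin n} (hj : j ∉ C) :
    rsMask a C = Function.update (rsMask a C) j 0 := by
  funext l
  rcases eq_or_ne l j with rfl | hl
  · simp [rsMask, hj]
  · simp [Function.update_of_ne hl]

lemma rsMask_nonneg (a : Fin n → ℝ) (ha : ∀ l, 0 ≤ a l) (C : Finset (Fin n)) :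
    ∀ l, 0 ≤ rsMask a C l := by
  intro l; unfold rsMask; split
  · exact ha l
  · exact le_refl 0

lemma rsMask_le (a : Fin n → ℝ) (ha : ∀ l, 0 ≤ a l) {C D : Finset (Fin n)} (hCD : C ⊆ D) :
    ∀ l, rsMask a C l ≤ rsMask a D l := by
  intro l; unfold rsMask
  by_cases hl : l ∈ C
  · simp [hl, hCD hl]
  · simp only [hl, if_neg, if_false]
    split
    · exact ha l
    · exact le_refl 0

lemma rs_submod (g : (Fin n → ℝ) → ℝ) (hg : dSOS 1 g)
    (a : Fin n → ℝ) (ha : ∀ l, 0 ≤ a l) (C : Finset (Fin n)) :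
    ∀ D : Finset (Fin n), Disjoint C D →
      g (rsMask a (C ∪ D)) - g (rsMask a D) ≤ g (rsMask a C) - g (rsMask a ∅) := by
  classical
  induction C using Finset.induction_on with
  | empty => intro D _; simp
  | @insert j C hj ih =>
    intro D hD
    have hjD : j ∉ D := Finset.disjoint_left.mp hD (Finset.mem_insert_self j C)
    have hCD : Disjoint C D := hD.mono_left (Finset.subset_insert j C)
    have hjCD : j ∉ C ∪ D := by simp [hj, hjD]
    have key := hg j 0 (a j) le_rfl (ha j) (rsMask a (C ∪ D)) (rsMask a C)
      (rsMask_nonneg a ha C) (rsMask_le a ha Finset.subset_union_left)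
    rw [zero_add, one_mul, ← rsMask_insert a hj, ← rsMask_insert a hjCD,
        ← rsMask_self a hj, ← rsMask_self a hjCD] at key
    have h2 := ih D hCD
    have hins : insert j C ∪ D = insert j (C ∪ D) := by rw [Finset.insert_union]
    rw [hins]
    linarith

lemma rs_pair (g : (Fin n → ℝ) → ℝ) (hg : dSOS 1 g)
    (hnn : ∀ t : Fin n → ℝ, (∀ l, 0 ≤ t l) → 0 ≤ g t)
    (a : Fin n → ℝ) (ha : ∀ l, 0 ≤ a l) {U C : Finset (Fin n)} (hCU : C ⊆ U) :
    g (rsMask a U) ≤ g (rsMask a C) + g (rsMask a (U \ C)) := by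
  have h1 := rs_submod g hg a ha C (U \ C) Finset.disjoint_sdiff
  rw [Finset.union_sdiff_of_subset hCU] at h1
  have h0 : 0 ≤ g (rsMask a ∅) := hnn _ (rsMask_nonneg a ha ∅)
  linarith

lemma rs_sum_ge (g : (Fin n → ℝ) → ℝ) (hg : dSOS 1 g)
    (hnn : ∀ t : Fin n → ℝ, (∀ l, 0 ≤ t l) → 0 ≤ g t)
    (a : Fin n → ℝ) (ha : ∀ l, 0 ≤ a l) (U : Finset (Fin n)) :
    (2 : ℝ) ^ U.card * g (rsMask a U) ≤ 2 * ∑ C ∈ U.powerset, g (rsMask a C) := by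
  classical
  have hflip : ∑ C ∈ U.powerset, g (rsMask a (U \ C)) = ∑ C ∈ U.powerset, g (rsMask a C) := by
    refine Finset.sum_nbij' (fun C => U \ C) (fun C => U \ C) ?_ ?_ ?_ ?_ ?_
    · intro C hC; exact Finset.mem_powerset.mpr (Finset.sdiff_subset)
    · intro C hC; exact Finset.mem_powerset.mpr (Finset.sdiff_subset)
    · intro C hC; exact Finset.sdiff_sdiff_eq_self (Finset.mem_powerset.mp hC)
    · intro C hC; exact Finset.sdiff_sdiff_eq_self (Finset.mem_powerset.mp hC)
    · intro C hC; rfl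
  have hterm : ∀ C ∈ U.powerset,
      g (rsMask a U) ≤ g (rsMask a C) + g (rsMask a (U \ C)) := by
    intro C hC; exact rs_pair g hg hnn a ha (Finset.mem_powerset.mp hC)
  calc (2 : ℝ) ^ U.card * g (rsMask a U)
      = ∑ _C ∈ U.powerset, g (rsMask a U) := by
        rw [Finset.sum_const, Finset.card_powerset, nsmul_eq_mul]
        push_cast; ring
    _ ≤ ∑ C ∈ U.powerset, (g (rsMask a C) + g (rsMask a (U \ C))) :=
        Finset.sum_le_sum hterm
    _ = 2 * ∑ C ∈ U.powerset, g (rsMask a C) := by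
        rw [Finset.sum_add_distrib, hflip]; ring

end RSVCGaux

/-- Theorem 5.1 (thm:rs-vcg), welfare guarantee: combinatorial auction with
multi-dimensional signals `s i T ≥ 0` and separable-SOS valuations
`v_{iT}(t) = g_{iT}(t_{−i}) + h_{iT}(t_i)`, where each `g i T` ignores
coordinate `i`, is SOS, nonnegative on nonnegative vectors and weakly
increasing, and each `h i T` is nonnegative and weakly increasing.
Averaging over a uniformly random potential-winner set `B`, the optimal proxy
welfare — where the proxy of `i ∈ B` for bundle `T` keeps the signals of
`Bᶜ ∪ {i}` and zeroes the rest — is at least one quarter of the optimal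
welfare: the Random-Sampling VCG mechanism is a 4-approximation. -/
theorem rs_vcg_welfare (n m : ℕ)
    (s : Fin n → Finset (Fin m) → ℝ) (hs : ∀ i T, 0 ≤ s i T)
    (g : Fin n → Finset (Fin m) → (Fin n → ℝ) → ℝ)
    (h : Fin n → Finset (Fin m) → ℝ → ℝ)
    (hg_indep : ∀ i T (t : Fin n → ℝ) (c : ℝ),
      g i T (Function.update t i c) = g i T t)
    (hg_sos : ∀ i T, dSOS 1 (g i T))
    (hg_nonneg : ∀ i T (t : Fin n → ℝ), (∀ l, 0 ≤ t l) → 0 ≤ g i T t)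
    (hg_mono : ∀ i T (t t' : Fin n → ℝ), (∀ l, t l ≤ t' l) → g i T t ≤ g i T t')
    (hh_nonneg : ∀ i T c, 0 ≤ h i T c)
    (hh_mono : ∀ i T, Monotone (h i T)) :
    (1 / 2 ^ n : ℝ) *
        ∑ B ∈ (Finset.univ : Finset (Fin n)).powerset,
          allocSup (fun S => ∑ i ∈ B,
            (g i (S i) (fun l => if l = i ∨ l ∉ B then s l (S i) else 0)
              + h i (S i) (s i (S i))))
      ≥ (1 / 4) *
          allocSup (fun T => ∑ i,
            (g i (T i) (fun l => s l (T i)) + h i (T i) (s i (T i)))) := by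
  classical
  have hne : Nonempty {T : Fin n → Finset (Fin m) // IsAlloc T} :=
    ⟨⟨fun _ => ∅, fun i j _ => Finset.disjoint_empty_left _⟩⟩
  have hpow : (0 : ℝ) < 2 ^ n := by positivity
  set P : Finset (Finset (Fin n)) := (Finset.univ : Finset (Fin n)).powerset with hP
  set A : ℝ := ∑ B ∈ P,
      allocSup (fun S => ∑ i ∈ B,
        (g i (S i) (fun l => if l = i ∨ l ∉ B then s l (S i) else 0)
          + h i (S i) (s i (S i)))) with hAdef
  rw [ge_iff_le]
  have key : ∀ Tp : {T : Fin n → Finset (Fin m) // IsAlloc T},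
      (∑ i, (g i (Tp.1 i) (fun l => s l (Tp.1 i)) + h i (Tp.1 i) (s i (Tp.1 i))))
        ≤ (4 / 2 ^ n) * A := by
    rintro ⟨T, hT⟩
    -- signal vectors
    set a : Fin n → (Fin n → ℝ) := fun i l => s l (T i) with ha
    have ha_nn : ∀ i l, 0 ≤ a i l := fun i l => hs l (T i)
    -- the per-B contribution of the fixed allocation T
    set F : Fin n → Finset (Fin n) → ℝ := fun i B =>
      g i (T i) (rsMask (a i) (insert i (Finset.univ \ B))) + h i (T i) (s i (T i)) with hF
    -- Step A: A dominates the sum of per-B contributions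
    have stepA : ∑ B ∈ P, ∑ i ∈ B, F i B ≤ A := by
      apply Finset.sum_le_sum
      intro B hB
      have hbdd : BddAbove (Set.range (fun S : {S : Fin n → Finset (Fin m) // IsAlloc S} =>
          ∑ i ∈ B, (g i (S.1 i) (fun l => if l = i ∨ l ∉ B then s l (S.1 i) else 0)
            + h i (S.1 i) (s i (S.1 i))))) := (Set.finite_range _).bddAbove
      have hle := le_ciSup hbdd ⟨T, hT⟩
      refine le_trans (le_of_eq ?_) hle
      refine Finset.sum_congr rfl fun i _ => ?_
      have hvec : rsMask (a i) (insert i (Finset.univ \ B))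
          = fun l => if l = i ∨ l ∉ B then s l (T i) else 0 := by
        funext l
        by_cases hl : l = i ∨ l ∉ B
        · simp [rsMask, Finset.mem_insert, Finset.mem_sdiff, hl, a]
        · simp [rsMask, Finset.mem_insert, Finset.mem_sdiff, hl, a]
      simp only [F]
      rw [hvec]
    -- Step B: swap the order of summation
    have stepB : ∑ B ∈ P, ∑ i ∈ B, F i B
        = ∑ i, ∑ B ∈ P.filter (fun B => i ∈ B), F i B := by
      calc ∑ B ∈ P, ∑ i ∈ B, F i B
          = ∑ B ∈ P, ∑ i, if i ∈ B then F i B else 0 := by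
            refine Finset.sum_congr rfl fun B _ => ?_
            rw [Finset.sum_ite_mem, Finset.univ_inter]
        _ = ∑ i, ∑ B ∈ P, if i ∈ B then F i B else 0 := Finset.sum_comm
        _ = ∑ i, ∑ B ∈ P.filter (fun B => i ∈ B), F i B := by
            refine Finset.sum_congr rfl fun i _ => (Finset.sum_filter _ _).symm
    -- Step C: per-agent bound
    have stepC : ∀ i : Fin n,
        (2 : ℝ) ^ n * (g i (T i) (a i) + h i (T i) (s i (T i)))
          ≤ 4 * ∑ B ∈ P.filter (fun B => i ∈ B), F i B := by
      intro i
      set U : Finset (Fin n) := Finset.univ.erase i with hU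
      -- reindex over kept sets C = univ \ B
      have hre : ∑ B ∈ P.filter (fun B => i ∈ B), F i B
          = ∑ C ∈ U.powerset,
              (g i (T i) (rsMask (a i) C) + h i (T i) (s i (T i))) := by
        refine Finset.sum_nbij' (fun B => Finset.univ \ B) (fun C => Finset.univ \ C)
          ?_ ?_ ?_ ?_ ?_
        · intro B hB
          rw [Finset.mem_filter] at hB
          refine Finset.mem_powerset.mpr fun l hl => ?_
          rw [Finset.mem_sdiff] at hl
          exact Finset.mem_erase.mpr ⟨fun hli => hl.2 (hli ▸ hB.2), Finset.mem_univ l⟩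
        · intro C hC
          rw [Finset.mem_filter]
          refine ⟨Finset.mem_powerset.mpr (Finset.subset_univ _), ?_⟩
          rw [Finset.mem_sdiff]
          exact ⟨Finset.mem_univ i, fun hiC =>
            (Finset.mem_erase.mp (Finset.mem_powerset.mp hC hiC)).1 rfl⟩
        · intro B hB
          exact Finset.sdiff_sdiff_eq_self (Finset.subset_univ B)
        · intro C hC
          exact Finset.sdiff_sdiff_eq_self (Finset.subset_univ C)
        · intro B hB
          rw [Finset.mem_filter] at hB
          have hiB : i ∉ Finset.univ \ B := by
            rw [Finset.mem_sdiff]; exact fun hc => hc.2 hB.2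
          have : rsMask (a i) (insert i (Finset.univ \ B))
              = Function.update (rsMask (a i) (Finset.univ \ B)) i (a i i) :=
            rsMask_insert (a i) hiB
          simp only [F, this, hg_indep]
      have hiU : i ∉ U := fun hc => (Finset.mem_erase.mp hc).1 rfl
      have hfull : g i (T i) (rsMask (a i) U) = g i (T i) (a i) := by
        have hmask : rsMask (a i) U = Function.update (a i) i 0 := by
          funext l
          rcases eq_or_ne l i with rfl | hl
          · simp [rsMask, hiU]
          · rw [Function.update_of_ne hl]
            simp [rsMask, U, Finset.mem_erase, hl]
        rw [hmask, hg_indep]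
      have hsum := rs_sum_ge (g i (T i)) (hg_sos i (T i))
        (fun t ht => hg_nonneg i (T i) t ht) (a i) (ha_nn i) U
      rw [hfull] at hsum
      have hcardU : U.card + 1 = n := by
        rw [hU, Finset.card_erase_of_mem (Finset.mem_univ i), Finset.card_univ,
          Fintype.card_fin]
        have := i.pos
        omega
      have hpow2 : (2 : ℝ) ^ n = 2 ^ U.card * 2 := by
        rw [← pow_succ, hcardU]
      have hsplit : ∑ C ∈ U.powerset,
          (g i (T i) (rsMask (a i) C) + h i (T i) (s i (T i)))
          = (∑ C ∈ U.powerset, g i (T i) (rsMask (a i) C))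
            + (2 : ℝ) ^ U.card * h i (T i) (s i (T i)) := by
        rw [Finset.sum_add_distrib, Finset.sum_const, Finset.card_powerset, nsmul_eq_mul]
        push_cast; ring
      have hpc : (0 : ℝ) < 2 ^ U.card := by positivity
      have hhn : 0 ≤ h i (T i) (s i (T i)) := hh_nonneg i (T i) (s i (T i))
      have hmul : 0 ≤ (2 : ℝ) ^ U.card * h i (T i) (s i (T i)) :=
        mul_nonneg (le_of_lt hpc) hhn
      rw [hre, hsplit, hpow2]
      nlinarith [hsum, hmul]
    -- combine
    have hcomb : (2 : ℝ) ^ n *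
        (∑ i, (g i (T i) (fun l => s l (T i)) + h i (T i) (s i (T i)))) ≤ 4 * A := by
      have h1 : ∑ i, (2 : ℝ) ^ n * (g i (T i) (a i) + h i (T i) (s i (T i)))
          ≤ ∑ i, 4 * ∑ B ∈ P.filter (fun B => i ∈ B), F i B :=
        Finset.sum_le_sum fun i _ => stepC i
      rw [← Finset.mul_sum, ← Finset.mul_sum] at h1
      rw [← stepB] at h1
      have : (fun i => g i (T i) (a i)) = fun i => g i (T i) (fun l => s l (T i)) := rfl
      calc (2 : ℝ) ^ n * ∑ i, (g i (T i) (fun l => s l (T i)) + h i (T i) (s i (T i)))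
          = (2 : ℝ) ^ n * ∑ i, (g i (T i) (a i) + h i (T i) (s i (T i))) := rfl
        _ ≤ 4 * ∑ B ∈ P, ∑ i ∈ B, F i B := h1
        _ ≤ 4 * A := by linarith [stepA]
    rw [div_mul_eq_mul_div, le_div_iff₀ hpow]
    linarith [hcomb]
  have hsup : allocSup (fun T => ∑ i,
      (g i (T i) (fun l => s l (T i)) + h i (T i) (s i (T i)))) ≤ (4 / 2 ^ n) * A :=
    ciSup_le key
  calc (1 / 4 : ℝ) * allocSup (fun T => ∑ i,
        (g i (T i) (fun l => s l (T i)) + h i (T i) (s i (T i))))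
      ≤ (1 / 4 : ℝ) * ((4 / 2 ^ n) * A) := by
        apply mul_le_mul_of_nonneg_left hsup; norm_num
    _ = (1 / 2 ^ n : ℝ) * A := by ring
    _ ≤ (1 / 2 ^ n : ℝ) * A := le_rfl
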